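/- There exist two sequences of real numbers $(h_n)_{n\ge 1}$ and $(S_n)_{n \ge 1}$ with $\lim_{n\to\infty} h_n = 1/2$ and $\lim_{n\to\infty} S_n = 2$, such that for every $y \ge 0$ and every integer $n \ge 1$, $e^{-ny}\,\cosh_{n-1}(ny) \ge h_n\, \mathbb{1}(y < S_n)$, where $\mathbb{1}(y < S_n)$ equals $1$ if $y < S_n$ and $0$ otherwise. -/

import Mathlib

/-- `cosh_n(x) = ∑_{k=0}^{n} x^(2k)/(2k)!`, the degree-`2n` Taylor polynomial of `cosh`. -/
noncomputable def coshPoly (n : ℕ) (x : ℝ) : ℝ :=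
  ∑ k ∈ Finset.range (n + 1), x ^ (2 * k) / (Nat.factorial (2 * k) : ℝ)
lemma two_coshPoly (n : ℕ) (x : ℝ) :
    2 * coshPoly n x = ∑ k ∈ Finset.range (2 * n + 2), (x ^ k + (-x) ^ k) / (Nat.factorial k : ℝ) := by
  induction n with
  | zero => simp [coshPoly, Finset.sum_range_succ]; norm_num
  | succ n ih =>
    have h1 : 2 * (n + 1) + 2 = (2 * n + 2) + 1 + 1 := by ring
    rw [coshPoly, Finset.sum_range_succ, ← coshPoly, h1, Finset.sum_range_succ,
      Finset.sum_range_succ, ← ih]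
    have ho : (-x) ^ (2 * n + 2) = x ^ (2 * n + 2) := by
      rw [show 2*n+2 = 2*(n+1) by ring, pow_mul, pow_mul]; norm_num
    have he : (-x) ^ (2 * n + 2 + 1) = -(x ^ (2 * n + 2 + 1)) := by
      rw [pow_succ, ho]; ring
    have : 2 * (n + 1) = 2 * n + 2 + 0 := by ring
    rw [ho, he]
    have h2 : 2 * (n + 1) = 2 * n + 2 := by ring
    rw [h2]
    ring

lemma exp_tsum (x : ℝ) : Real.exp x = ∑' n : ℕ, x ^ n / (Nat.factorial n : ℝ) := by
  rw [Real.exp_eq_exp_ℝ, NormedSpace.exp_eq_tsum_div]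

lemma tail_eq (x : ℝ) (m : ℕ) :
    Real.exp x - ∑ k ∈ Finset.range m, x ^ k / (Nat.factorial k : ℝ)
      = ∑' j : ℕ, x ^ (j + m) / (Nat.factorial (j + m) : ℝ) := by
  have h := Summable.sum_add_tsum_nat_add m (Real.summable_pow_div_factorial x)
  rw [exp_tsum x]; linarith [h]

lemma summable_shift (x : ℝ) (m : ℕ) :
    Summable (fun j : ℕ => x ^ (j + m) / (Nat.factorial (j + m) : ℝ)) :=
  (summable_nat_add_iff m).2 (Real.summable_pow_div_factorial x)

lemma tail_nonneg (x : ℝ) (hx : 0 ≤ x) (m : ℕ) :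
    0 ≤ ∑' j : ℕ, x ^ (j + m) / (Nat.factorial (j + m) : ℝ) :=
  tsum_nonneg fun j => by positivity

-- Chernoff: tail at index m ≤ l⁻¹^m * exp (l*x)
lemma tail_chernoff (x : ℝ) (hx : 0 ≤ x) (m : ℕ) (l : ℝ) (hl : 1 ≤ l) :
    (∑' j : ℕ, x ^ (j + m) / (Nat.factorial (j + m) : ℝ)) ≤ l⁻¹ ^ m * Real.exp (l * x) := by
  have hl0 : 0 < l := lt_of_lt_of_le one_pos hl
  have step : ∀ j : ℕ, x ^ (j + m) / (Nat.factorial (j + m) : ℝ)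
      ≤ l⁻¹ ^ m * ((l * x) ^ (j + m) / (Nat.factorial (j + m) : ℝ)) := by
    intro j
    have : l⁻¹ ^ m * ((l * x) ^ (j + m) / (Nat.factorial (j + m) : ℝ))
        = l ^ j * (x ^ (j + m) / (Nat.factorial (j + m) : ℝ)) := by
      rw [mul_pow, inv_pow]
      field_simp
      rw [pow_add l j m]
      ring
    rw [this]
    have h1 : (1:ℝ) ≤ l ^ j := one_le_pow₀ hl
    have h2 : 0 ≤ x ^ (j + m) / (Nat.factorial (j + m) : ℝ) := by positivity
    nlinarith
  calc (∑' j : ℕ, x ^ (j + m) / (Nat.factorial (j + m) : ℝ))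
      ≤ ∑' j : ℕ, l⁻¹ ^ m * ((l * x) ^ (j + m) / (Nat.factorial (j + m) : ℝ)) :=
        Summable.tsum_le_tsum step (summable_shift x m) ((summable_shift (l*x) m).mul_left _)
    _ = l⁻¹ ^ m * ∑' j : ℕ, (l * x) ^ (j + m) / (Nat.factorial (j + m) : ℝ) := tsum_mul_left
    _ ≤ l⁻¹ ^ m * Real.exp (l * x) := by
        have h := tail_eq (l * x) m
        have hhead : 0 ≤ ∑ k ∈ Finset.range m, (l*x) ^ k / (Nat.factorial k : ℝ) :=
          Finset.sum_nonneg fun k _ => by positivity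
        have : (∑' j : ℕ, (l * x) ^ (j + m) / (Nat.factorial (j + m) : ℝ)) ≤ Real.exp (l*x) := by
          rw [← h]; linarith
        have hp : (0:ℝ) ≤ l⁻¹ ^ m := by positivity
        nlinarith

-- alternating tail bounded by positive tail
lemma tail_neg_le (x : ℝ) (hx : 0 ≤ x) (m : ℕ) :
    (∑' j : ℕ, (-x) ^ (j + m) / (Nat.factorial (j + m) : ℝ))
      ≤ ∑' j : ℕ, x ^ (j + m) / (Nat.factorial (j + m) : ℝ) := by
  refine Summable.tsum_le_tsum (fun j => ?_) (summable_shift (-x) m) (summable_shift x m)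
  have hk : (-x) ^ (j + m) ≤ x ^ (j + m) := by
    calc (-x) ^ (j + m) ≤ |(-x) ^ (j + m)| := le_abs_self _
      _ = x ^ (j + m) := by rw [abs_pow, abs_neg, abs_of_nonneg hx]
  have hf : (0:ℝ) < (Nat.factorial (j + m) : ℝ) := by positivity
  gcongr

lemma main_bound (nn : ℕ) (x : ℝ) (hx : 0 ≤ x) (l : ℝ) (hl : 1 ≤ l) :
    Real.exp (-x) * coshPoly nn x ≥ 1/2 - l⁻¹ ^ (2*nn+2) * Real.exp ((l-1)*x) := by
  set m := 2*nn+2 with hm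
  set T := ∑' j : ℕ, x ^ (j + m) / (Nat.factorial (j + m) : ℝ) with hTdef
  have hT0 := tail_nonneg x hx m
  have hTc := tail_chernoff x hx m l hl
  have hP : (∑ k ∈ Finset.range m, x ^ k / (Nat.factorial k : ℝ)) = Real.exp x - T := by
    have := tail_eq x m; linarith
  have hQ : (∑ k ∈ Finset.range m, (-x) ^ k / (Nat.factorial k : ℝ)) ≥ Real.exp (-x) - T := by
    have h1 := tail_eq (-x) m
    have h2 := tail_neg_le x hx m
    linarith
  have hsplit : ∑ k ∈ Finset.range m, (x ^ k + (-x) ^ k) / (Nat.factorial k : ℝ)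
      = (∑ k ∈ Finset.range m, x ^ k / (Nat.factorial k : ℝ))
        + (∑ k ∈ Finset.range m, (-x) ^ k / (Nat.factorial k : ℝ)) := by
    rw [← Finset.sum_add_distrib]
    exact Finset.sum_congr rfl fun k _ => add_div _ _ _
  have hco := two_coshPoly nn x
  rw [← hm] at hco
  have hcosh : 2 * coshPoly nn x ≥ Real.exp x + Real.exp (-x) - 2 * T := by
    rw [hco, hsplit, hP]; linarith
  have he : Real.exp (-x) > 0 := Real.exp_pos _
  have h1 : Real.exp (-x) * Real.exp x = 1 := by
    rw [← Real.exp_add]; simp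
  have h2 : Real.exp (-x) * Real.exp (l * x) = Real.exp ((l-1) * x) := by
    rw [← Real.exp_add]; ring_nf
  have h3 : Real.exp (-x) * T ≤ Real.exp (-x) * (l⁻¹ ^ m * Real.exp (l * x)) :=
    mul_le_mul_of_nonneg_left hTc (le_of_lt he)
  have h4 : Real.exp (-x) * (l⁻¹ ^ m * Real.exp (l * x)) = l⁻¹ ^ m * Real.exp ((l-1)*x) := by
    rw [← h2]; ring
  nlinarith [Real.exp_pos (-x), mul_pos he he]

lemma exponent_bound (δ N : ℝ) (hδ0 : 0 < δ) (hδ1 : δ ≤ 1) (hN : 0 ≤ N) :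
    (δ/4) * (N * (2 - δ)) - (2*N) * Real.log (1 + δ/4) ≤ -(N * δ^2)/10 := by
  have hb : (0:ℝ) < 1 + δ/4 := by linarith
  have hlog : 1 - (1 + δ/4)⁻¹ ≤ Real.log (1 + δ/4) := Real.one_sub_inv_le_log_of_pos hb
  have hlog2 : δ/4 ≤ (1 + δ/4) * Real.log (1 + δ/4) := by
    have h := mul_le_mul_of_nonneg_left hlog (le_of_lt hb)
    have : (1 + δ/4) * (1 - (1 + δ/4)⁻¹) = δ/4 := by field_simp; ring
    linarith
  have hlogpos : 0 ≤ Real.log (1 + δ/4) := Real.log_nonneg (by linarith)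
  nlinarith [mul_le_mul_of_nonneg_left hlog2 hN, mul_nonneg hN hlogpos,
    mul_nonneg (mul_nonneg hN hlogpos) hδ0.le, mul_nonneg hN (mul_nonneg hδ0.le hδ0.le)]

noncomputable def dlt (n : ℕ) : ℝ := (n : ℝ) ^ (-(1/4 : ℝ))

lemma dlt_nonneg (n : ℕ) : 0 ≤ dlt n := Real.rpow_nonneg (Nat.cast_nonneg n) _

lemma dlt_pos {n : ℕ} (hn : 1 ≤ n) : 0 < dlt n :=
  Real.rpow_pos_of_pos (by exact_mod_cast hn) _

lemma dlt_le_one {n : ℕ} (hn : 1 ≤ n) : dlt n ≤ 1 :=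
  Real.rpow_le_one_of_one_le_of_nonpos (by exact_mod_cast hn) (by norm_num)

lemma dlt_sq {n : ℕ} (hn : 1 ≤ n) : (n : ℝ) * (dlt n) ^ 2 = (n : ℝ) ^ ((1:ℝ)/2) := by
  have hn0 : (0:ℝ) < (n:ℝ) := by exact_mod_cast hn
  rw [dlt, ← Real.rpow_natCast ((n:ℝ) ^ (-(1/4:ℝ))) 2, ← Real.rpow_mul hn0.le]
  rw [show (n:ℝ) * (n:ℝ) ^ (-(1/4:ℝ) * (2:ℕ)) = (n:ℝ) ^ (1:ℝ) * (n:ℝ) ^ (-(1/4:ℝ) * (2:ℕ)) by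
    rw [Real.rpow_one]]
  rw [← Real.rpow_add hn0]
  norm_num

theorem stmt7 :
    ∃ h S : ℕ → ℝ,
      Filter.Tendsto h Filter.atTop (nhds (1 / 2)) ∧
      Filter.Tendsto S Filter.atTop (nhds 2) ∧
      ∀ n : ℕ, 1 ≤ n → ∀ y : ℝ, 0 ≤ y →
        Real.exp (-(n * y)) * coshPoly (n - 1) (n * y) ≥
          h n * (if y < S n then (1 : ℝ) else 0) := by
  set S : ℕ → ℝ := fun n => 2 - dlt n with hS
  set l : ℕ → ℝ := fun n => 1 + dlt n / 4 with hl
  set e : ℕ → ℝ := fun n => (l n)⁻¹ ^ (2*(n-1)+2) * Real.exp ((l n - 1) * ((n:ℝ) * S n)) with he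
  refine ⟨fun n => 1/2 - e n, S, ?_, ?_, ?_⟩
  · -- limit of h
    have hbound : ∀ n : ℕ, 1 ≤ n → e n ≤ Real.exp (-((n:ℝ) ^ ((1:ℝ)/2)) / 10) := by
      intro n hn
      have hδ0 := dlt_pos hn
      have hlpos : (0:ℝ) < l n := by simp only [hl]; linarith
      have hinv : (l n)⁻¹ ^ (2*(n-1)+2)
          = Real.exp (((2*(n-1)+2 : ℕ) : ℝ) * Real.log (l n)⁻¹) := by
        rw [Real.exp_nat_mul, Real.exp_log (by positivity)]
      show (l n)⁻¹ ^ (2*(n-1)+2) * Real.exp ((l n - 1) * ((n:ℝ) * S n)) ≤ _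
      rw [hinv, ← Real.exp_add]
      apply Real.exp_le_exp.2
      have hcast : ((2*(n-1)+2 : ℕ) : ℝ) = 2 * (n:ℝ) := by
        have : 2*(n-1)+2 = 2*n := by omega
        rw [this]; push_cast; ring
      rw [hcast, Real.log_inv]
      have hEB := exponent_bound (dlt n) (n:ℝ) hδ0 (dlt_le_one hn) (Nat.cast_nonneg n)
      have hsq := dlt_sq hn
      have hl1 : l n - 1 = dlt n / 4 := by simp [hl]
      have hS1 : S n = 2 - dlt n := rfl
      rw [hl1, hS1]
      have hlog : l n = 1 + dlt n / 4 := rfl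
      rw [hlog]
      nlinarith [hEB, hsq]
    have he0 : ∀ n : ℕ, 0 ≤ e n := by
      intro n
      have : (0:ℝ) < l n := by
        have := dlt_nonneg n; simp only [hl]; linarith
      positivity
    have hup : Filter.Tendsto (fun n : ℕ => Real.exp (-((n:ℝ) ^ ((1:ℝ)/2)) / 10))
        Filter.atTop (nhds 0) := by
      apply Real.tendsto_exp_atBot.comp
      have h1 : Filter.Tendsto (fun n : ℕ => (n:ℝ) ^ ((1:ℝ)/2)) Filter.atTop Filter.atTop :=
        (tendsto_rpow_atTop (by norm_num)).comp tendsto_natCast_atTop_atTop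
      have h2 : Filter.Tendsto (fun n : ℕ => -((n:ℝ) ^ ((1:ℝ)/2))) Filter.atTop Filter.atBot :=
        Filter.tendsto_neg_atTop_atBot.comp h1
      exact h2.atBot_div_const (by norm_num)
    have hez : Filter.Tendsto e Filter.atTop (nhds 0) := by
      apply squeeze_zero' (Filter.Eventually.of_forall he0) ?_ hup
      filter_upwards [Filter.eventually_ge_atTop 1] with n hn using hbound n hn
    have : Filter.Tendsto (fun n => 1/2 - e n) Filter.atTop (nhds (1/2 - 0)) :=
      tendsto_const_nhds.sub hez
    simpa using this
  · -- limit of S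
    have hδ : Filter.Tendsto dlt Filter.atTop (nhds 0) := by
      have : Filter.Tendsto (fun x : ℝ => x ^ (-(1/4:ℝ))) Filter.atTop (nhds 0) :=
        tendsto_rpow_neg_atTop (by norm_num)
      exact this.comp tendsto_natCast_atTop_atTop
    have : Filter.Tendsto S Filter.atTop (nhds (2 - 0)) := tendsto_const_nhds.sub hδ
    simpa using this
  · -- pointwise inequality
    intro n hn y hy
    have hx : (0:ℝ) ≤ (n:ℝ) * y := mul_nonneg (Nat.cast_nonneg n) hy
    by_cases hyS : y < S n
    · simp only [if_pos hyS, mul_one]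
      have hδ0 := dlt_pos hn
      have hl1 : (1:ℝ) ≤ l n := by simp only [hl]; linarith
      have hmb := main_bound (n-1) ((n:ℝ)*y) hx (l n) hl1
      have hxle : (n:ℝ) * y ≤ (n:ℝ) * S n :=
        mul_le_mul_of_nonneg_left hyS.le (Nat.cast_nonneg n)
      have hexple : Real.exp ((l n - 1) * ((n:ℝ)*y)) ≤ Real.exp ((l n - 1) * ((n:ℝ) * S n)) := by
        apply Real.exp_le_exp.2
        apply mul_le_mul_of_nonneg_left hxle
        simp only [hl]; linarith
      have hpow : (0:ℝ) ≤ (l n)⁻¹ ^ (2*(n-1)+2) := by positivity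
      have := mul_le_mul_of_nonneg_left hexple hpow
      simp only [he]
      linarith [hmb]
    · simp only [if_neg hyS, mul_zero]
      have : 0 ≤ coshPoly (n-1) ((n:ℝ)*y) :=
        Finset.sum_nonneg fun k _ => by positivity
      have := mul_nonneg (Real.exp_pos (-((n:ℝ)*y))).le this
      linarith
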